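/- Let f : ℝⁿ → ℝ be a continuous function with f^lc > -∞ everywhere and lim_{|ξ|→+∞} f(ξ) = +∞. Then for every ξ ∈ ℝⁿ the infimum in the Carathéodory formula is attained, i.e. there exist λ_i ≥ 0 with Σ_{i=1}^{n+1} λ_i = 1 and ξ_i ∈ ℝⁿ with ξ = Σ_{i=1}^{n+1} λ_i ξ_i and f^lc(ξ) = max_{1≤i≤n+1} f(ξ_i); moreover f^lc is continuous on ℝⁿ, and hence f^lslc = f^lc. -/

import Mathlib

open Set

/-- A function on `ℝⁿ` with values in a linear order is *level convex* if
`f (t ξ + (1-t) η) ≤ max (f ξ) (f η)` for all `ξ, η` and `t ∈ [0,1]`. -/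
def LevelConvex {n : ℕ} {β : Type*} [LinearOrder β]
    (f : EuclideanSpace ℝ (Fin n) → β) : Prop :=
  ∀ ξ η : EuclideanSpace ℝ (Fin n), ∀ t ∈ Set.Icc (0 : ℝ) 1,
    f (t • ξ + (1 - t) • η) ≤ max (f ξ) (f η)

/-- The level convex envelope of `f : ℝⁿ → [-∞,+∞]`. -/
noncomputable def lcEnv {n : ℕ} (f : EuclideanSpace ℝ (Fin n) → EReal) :
    EuclideanSpace ℝ (Fin n) → EReal :=
  fun ξ => ⨆ (g : EuclideanSpace ℝ (Fin n) → EReal)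
    (_ : LevelConvex g ∧ g ≤ f), g ξ

/-- The lower semicontinuous level convex envelope of `f : ℝⁿ → [-∞,+∞]`. -/
noncomputable def lslcEnv {n : ℕ} (f : EuclideanSpace ℝ (Fin n) → EReal) :
    EuclideanSpace ℝ (Fin n) → EReal :=
  fun ξ => ⨆ (g : EuclideanSpace ℝ (Fin n) → EReal)
    (_ : LowerSemicontinuous g ∧ LevelConvex g ∧ g ≤ f), g ξ

namespace LCAux

variable {n : ℕ}

/-- The set of Carathéodory representations of `ξ`. -/
def RepSet (ξ : EuclideanSpace ℝ (Fin n)) :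
    Set ((Fin (n+1) → ℝ) × (Fin (n+1) → EuclideanSpace ℝ (Fin n))) :=
  {p | (∀ i, 0 ≤ p.1 i) ∧ (∑ i, p.1 i) = 1 ∧ ξ = ∑ i, p.1 i • p.2 i}

noncomputable def Gfun (f : EuclideanSpace ℝ (Fin n) → ℝ)
    (p : (Fin (n+1) → ℝ) × (Fin (n+1) → EuclideanSpace ℝ (Fin n))) : ℝ :=
  Finset.univ.sup' Finset.univ_nonempty (fun i => f (p.2 i))

noncomputable def Ffun (f : EuclideanSpace ℝ (Fin n) → ℝ)
    (ξ : EuclideanSpace ℝ (Fin n)) : ℝ :=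
  sInf (Gfun f '' RepSet ξ)

lemma self_mem_repSet (ξ : EuclideanSpace ℝ (Fin n)) :
    ((fun _ => ((n:ℝ)+1)⁻¹, fun _ => ξ)) ∈ RepSet ξ := by
  have hcard : (Finset.univ : Finset (Fin (n+1))).card = n + 1 := by simp
  have hsum : (∑ _i : Fin (n+1), ((n:ℝ)+1)⁻¹) = 1 := by
    rw [Finset.sum_const, hcard, nsmul_eq_mul]
    push_cast
    field_simp
  refine ⟨fun i => by positivity, hsum, ?_⟩
  rw [← Finset.sum_smul, hsum, one_smul]

lemma Gfun_self (f : EuclideanSpace ℝ (Fin n) → ℝ) (ξ : EuclideanSpace ℝ (Fin n)) :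
    Gfun f ((fun _ => ((n:ℝ)+1)⁻¹, fun _ => ξ)) = f ξ := by
  simp [Gfun]

lemma f_le_Gfun (f : EuclideanSpace ℝ (Fin n) → ℝ) (p) (i : Fin (n+1)) :
    f (p.2 i) ≤ Gfun f p :=
  Finset.le_sup' (fun i => f (p.2 i)) (Finset.mem_univ i)

lemma Gfun_le (f : EuclideanSpace ℝ (Fin n) → ℝ) (p) {c : ℝ}
    (h : ∀ i, f (p.2 i) ≤ c) : Gfun f p ≤ c :=
  Finset.sup'_le _ _ (fun i _ => h i)

lemma bddBelow_of_lb {f : EuclideanSpace ℝ (Fin n) → ℝ} {c : ℝ}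
    (hc : ∀ x, c ≤ f x) (ξ : EuclideanSpace ℝ (Fin n)) :
    BddBelow (Gfun f '' RepSet ξ) := by
  refine ⟨c, ?_⟩
  rintro y ⟨p, _, rfl⟩
  exact le_trans (hc (p.2 0)) (f_le_Gfun f p 0)

lemma Ffun_le {f : EuclideanSpace ℝ (Fin n) → ℝ} {c : ℝ}
    (hc : ∀ x, c ≤ f x) {ξ : EuclideanSpace ℝ (Fin n)} {p} (hp : p ∈ RepSet ξ) :
    Ffun f ξ ≤ Gfun f p :=
  csInf_le (bddBelow_of_lb hc ξ) ⟨p, hp, rfl⟩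

/-- coercivity + continuity gives a global lower bound. -/
lemma exists_lb (f : EuclideanSpace ℝ (Fin n) → ℝ) (hf : Continuous f)
    (hcoer : ∀ M : ℝ, ∃ R : ℝ, ∀ ξ : EuclideanSpace ℝ (Fin n), R ≤ ‖ξ‖ → M ≤ f ξ) :
    ∃ c, ∀ x, c ≤ f x := by
  obtain ⟨R, hR⟩ := hcoer 0
  set R' := max R 0 with hR'
  have h0 : (0:EuclideanSpace ℝ (Fin n)) ∈ Metric.closedBall (0:EuclideanSpace ℝ (Fin n)) R' := by
    simp [hR', le_max_right]
  obtain ⟨x0, _, hx0⟩ := (isCompact_closedBall (0:EuclideanSpace ℝ (Fin n)) R').exists_isMinOn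
    ⟨0, h0⟩ hf.continuousOn
  refine ⟨min (f x0) 0, fun x => ?_⟩
  by_cases hx : ‖x‖ ≤ R'
  · exact le_trans (min_le_left _ _) (hx0 (by simpa [Metric.mem_closedBall, dist_eq_norm] using hx))
  · exact le_trans (min_le_right _ _) (hR x (le_trans (le_max_left _ _) (le_of_not_ge hx)))

end LCAux

namespace LCAux

variable {n : ℕ}

lemma repSet_isClosed (ξ : EuclideanSpace ℝ (Fin n)) : IsClosed (RepSet ξ) := by
  have h1 : IsClosed {p : (Fin (n+1) → ℝ) × (Fin (n+1) → EuclideanSpace ℝ (Fin n)) |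
      ∀ i, 0 ≤ p.1 i} := by
    have : {p : (Fin (n+1) → ℝ) × (Fin (n+1) → EuclideanSpace ℝ (Fin n)) | ∀ i, 0 ≤ p.1 i}
        = ⋂ i, {p | 0 ≤ p.1 i} := by ext p; simp [Set.mem_iInter]
    rw [this]
    exact isClosed_iInter fun i =>
      isClosed_le continuous_const ((continuous_apply i).comp continuous_fst)
  have h2 : IsClosed {p : (Fin (n+1) → ℝ) × (Fin (n+1) → EuclideanSpace ℝ (Fin n)) |
      (∑ i, p.1 i) = 1} :=
    isClosed_eq (continuous_finset_sum _ fun i _ => (continuous_apply i).comp continuous_fst)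
      continuous_const
  have h3 : IsClosed {p : (Fin (n+1) → ℝ) × (Fin (n+1) → EuclideanSpace ℝ (Fin n)) |
      ξ = ∑ i, p.1 i • p.2 i} :=
    isClosed_eq continuous_const (continuous_finset_sum _ fun i _ =>
      ((continuous_apply i).comp continuous_fst).smul ((continuous_apply i).comp continuous_snd))
  have : RepSet ξ = {p | ∀ i, 0 ≤ p.1 i} ∩ ({p | (∑ i, p.1 i) = 1} ∩
      {p | ξ = ∑ i, p.1 i • p.2 i}) := by
    ext p; simp [RepSet, and_assoc]
  rw [this]
  exact h1.inter (h2.inter h3)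

lemma Gfun_continuous {f : EuclideanSpace ℝ (Fin n) → ℝ} (hf : Continuous f) :
    Continuous (Gfun f) :=
  Continuous.finset_sup'_apply Finset.univ_nonempty
    (fun i _ => hf.comp ((continuous_apply i).comp continuous_snd))

lemma exists_min (f : EuclideanSpace ℝ (Fin n) → ℝ) (hf : Continuous f)
    (hcoer : ∀ M : ℝ, ∃ R : ℝ, ∀ ξ : EuclideanSpace ℝ (Fin n), R ≤ ‖ξ‖ → M ≤ f ξ)
    (ξ : EuclideanSpace ℝ (Fin n)) :
    ∃ p ∈ RepSet ξ, Ffun f ξ = Gfun f p ∧ ∀ q ∈ RepSet ξ, Gfun f p ≤ Gfun f q := by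
  obtain ⟨R, hR⟩ := hcoer (f ξ + 1)
  set R' := max R 0 with hR'def
  set K := RepSet ξ ∩ {p | Gfun f p ≤ f ξ} with hKdef
  have hp₀K : ((fun _ => ((n:ℝ)+1)⁻¹, fun _ => ξ)) ∈ K :=
    ⟨self_mem_repSet ξ, by simp [Gfun_self]⟩
  set r := max 1 R' with hrdef
  have hr0 : (0:ℝ) ≤ r := le_trans zero_le_one (le_max_left _ _)
  have hKsub : K ⊆ Metric.closedBall 0 r := by
    rintro p ⟨hp, hGp⟩
    rw [Metric.mem_closedBall, dist_zero_right, Prod.norm_def]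
    have h1 : ‖p.1‖ ≤ r := by
      rw [pi_norm_le_iff_of_nonneg hr0]
      intro i
      rw [Real.norm_eq_abs, abs_of_nonneg (hp.1 i)]
      calc p.1 i ≤ ∑ j, p.1 j :=
            Finset.single_le_sum (fun j _ => hp.1 j) (Finset.mem_univ i)
        _ = 1 := hp.2.1
        _ ≤ r := le_max_left _ _
    have h2 : ‖p.2‖ ≤ r := by
      rw [pi_norm_le_iff_of_nonneg hr0]
      intro i
      refine le_trans ?_ (le_max_right 1 R')
      by_contra hcon
      push_neg at hcon
      have : f ξ + 1 ≤ f (p.2 i) :=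
        hR _ (le_trans (le_trans (le_max_left _ _) (le_of_lt hcon)) le_rfl)
      have h3 : f (p.2 i) ≤ f ξ := le_trans (f_le_Gfun f p i) hGp
      linarith
    exact max_le h1 h2
  have hKclosed : IsClosed K :=
    (repSet_isClosed ξ).inter (isClosed_le (Gfun_continuous hf) continuous_const)
  have hKcompact : IsCompact K :=
    (isCompact_closedBall (0:(Fin (n+1) → ℝ) × (Fin (n+1) → EuclideanSpace ℝ (Fin n)))
      r).of_isClosed_subset hKclosed hKsub
  obtain ⟨p, hpK, hmin⟩ := hKcompact.exists_isMinOn ⟨_, hp₀K⟩ (Gfun_continuous hf).continuousOn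
  have hglobal : ∀ q ∈ RepSet ξ, Gfun f p ≤ Gfun f q := by
    intro q hq
    by_cases hGq : Gfun f q ≤ f ξ
    · exact hmin ⟨hq, hGq⟩
    · calc Gfun f p ≤ Gfun f ((fun _ => ((n:ℝ)+1)⁻¹, fun _ => ξ)) := hmin hp₀K
        _ = f ξ := Gfun_self f ξ
        _ ≤ Gfun f q := le_of_not_ge hGq
  refine ⟨p, hpK.1, ?_, hglobal⟩
  refine IsLeast.csInf_eq ⟨⟨p, hpK.1, rfl⟩, ?_⟩
  rintro y ⟨q, hq, rfl⟩
  exact hglobal q hq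

end LCAux

namespace LCAux

variable {n : ℕ}

lemma pad_sum {M : Type*} [AddCommMonoid M] {m N : ℕ} (hm : m ≤ N) (g : Fin m → M) :
    (∑ j : Fin N, (if h : (j:ℕ) < m then g ⟨j, h⟩ else 0)) = ∑ i : Fin m, g i := by
  rw [Fin.sum_univ_eq_sum_range (fun k => if h : k < m then g ⟨k, h⟩ else 0) N,
    ← Finset.sum_subset (Finset.range_subset_range.2 hm)
      (fun x _ hx => dif_neg (by simpa using hx)),
    ← Fin.sum_univ_eq_sum_range (fun k => if h : k < m then g ⟨k, h⟩ else 0) m]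
  exact Finset.sum_congr rfl fun i _ => by rw [dif_pos i.isLt]

/-- Carathéodory: a point of the convex hull of `s` has a representation with `n+1`
points of `s`. -/
lemma rep_of_mem_convexHull {s : Set (EuclideanSpace ℝ (Fin n))}
    {x : EuclideanSpace ℝ (Fin n)} (hx : x ∈ convexHull ℝ s) :
    ∃ p ∈ RepSet x, ∀ i, p.2 i ∈ s := by
  obtain ⟨ι, hι, z, w, hzs, hai, hwpos, hwsum, hwx⟩ := eq_pos_convex_span_of_mem_convexHull hx
  have hcard : Fintype.card ι ≤ n + 1 := by
    have h1 := hai.card_le_finrank_succ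
    have h2 : Module.finrank ℝ (vectorSpan ℝ (Set.range z)) ≤ n := by
      calc Module.finrank ℝ (vectorSpan ℝ (Set.range z))
          ≤ Module.finrank ℝ (EuclideanSpace ℝ (Fin n)) := Submodule.finrank_le _
        _ = n := finrank_euclideanSpace_fin
    omega
  set m := Fintype.card ι with hm
  have hne : Nonempty ι := by
    by_contra hemp
    rw [not_nonempty_iff] at hemp
    rw [Finset.univ_eq_empty, Finset.sum_empty] at hwsum
    exact one_ne_zero hwsum.symm
  have hmpos : 0 < m := Fintype.card_pos
  obtain ⟨e⟩ : Nonempty (ι ≃ Fin m) := ⟨Fintype.equivFin ι⟩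
  set l : Fin (n+1) → ℝ := fun j => if h : (j:ℕ) < m then w (e.symm ⟨j, h⟩) else 0 with hl
  set ξs : Fin (n+1) → EuclideanSpace ℝ (Fin n) := fun j =>
    if h : (j:ℕ) < m then z (e.symm ⟨j, h⟩) else z (e.symm ⟨0, hmpos⟩) with hξs
  have hsum : (∑ j, l j) = 1 := by
    rw [hl]
    rw [pad_sum hcard (fun i => w (e.symm i))]
    rw [Equiv.sum_comp e.symm w]
    exact hwsum
  have hrep : x = ∑ j, l j • ξs j := by
    have : (∑ j, l j • ξs j) = ∑ j : Fin (n+1),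
        (if h : (j:ℕ) < m then w (e.symm ⟨j, h⟩) • z (e.symm ⟨j, h⟩) else 0) := by
      refine Finset.sum_congr rfl fun j _ => ?_
      by_cases h : (j:ℕ) < m
      · simp [hl, hξs, dif_pos h]
      · simp [hl, hξs, dif_neg h]
    rw [this, pad_sum hcard (fun i => w (e.symm i) • z (e.symm i)),
      Equiv.sum_comp e.symm (fun i => w i • z i)]
    exact hwx.symm
  refine ⟨(l, ξs), ⟨?_, hsum, hrep⟩, ?_⟩
  · intro i
    by_cases h : (i:ℕ) < m
    · simp only [hl, dif_pos h]; exact (hwpos _).le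
    · simp [hl, dif_neg h]
  · intro i
    by_cases h : (i:ℕ) < m
    · simp only [hξs, dif_pos h]; exact hzs (Set.mem_range_self _)
    · simp only [hξs, dif_neg h]; exact hzs (Set.mem_range_self _)

lemma mem_convexHull_of_rep {s : Set (EuclideanSpace ℝ (Fin n))}
    {x : EuclideanSpace ℝ (Fin n)} {p} (hp : p ∈ RepSet x) (hmem : ∀ i, p.2 i ∈ s) :
    x ∈ convexHull ℝ s := by
  rw [hp.2.2]
  exact Convex.sum_mem (convex_convexHull ℝ s) (fun i _ => hp.1 i) hp.2.1
    (fun i _ => subset_convexHull ℝ s (hmem i))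

lemma Ffun_levelConvex (f : EuclideanSpace ℝ (Fin n) → ℝ) (hf : Continuous f)
    (hcoer : ∀ M : ℝ, ∃ R : ℝ, ∀ ξ : EuclideanSpace ℝ (Fin n), R ≤ ‖ξ‖ → M ≤ f ξ) :
    LevelConvex (Ffun f) := by
  intro ξ η t ht
  obtain ⟨c, hc⟩ := exists_lb f hf hcoer
  set d := max (Ffun f ξ) (Ffun f η) with hd
  obtain ⟨p, hp, hFp, _⟩ := exists_min f hf hcoer ξ
  obtain ⟨q, hq, hFq, _⟩ := exists_min f hf hcoer η
  have hξ : ξ ∈ convexHull ℝ {x | f x ≤ d} :=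
    mem_convexHull_of_rep hp (fun i => le_trans (f_le_Gfun f p i)
      (le_trans hFp.ge (le_max_left _ _)))
  have hη : η ∈ convexHull ℝ {x | f x ≤ d} :=
    mem_convexHull_of_rep hq (fun i => le_trans (f_le_Gfun f q i)
      (le_trans hFq.ge (le_max_right _ _)))
  have hcomb : t • ξ + (1 - t) • η ∈ convexHull ℝ {x | f x ≤ d} :=
    (convex_convexHull ℝ _) hξ hη ht.1 (by linarith [ht.2]) (by ring)
  obtain ⟨p', hp', hmem'⟩ := rep_of_mem_convexHull hcomb
  exact le_trans (Ffun_le hc hp') (Gfun_le f p' (fun i => hmem' i))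

lemma Ffun_le_self (f : EuclideanSpace ℝ (Fin n) → ℝ) (hf : Continuous f)
    (hcoer : ∀ M : ℝ, ∃ R : ℝ, ∀ ξ : EuclideanSpace ℝ (Fin n), R ≤ ‖ξ‖ → M ≤ f ξ)
    (ξ : EuclideanSpace ℝ (Fin n)) : Ffun f ξ ≤ f ξ := by
  obtain ⟨c, hc⟩ := exists_lb f hf hcoer
  calc Ffun f ξ ≤ Gfun f ((fun _ => ((n:ℝ)+1)⁻¹, fun _ => ξ)) :=
        Ffun_le hc (self_mem_repSet ξ)
    _ = f ξ := Gfun_self f ξ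

end LCAux

namespace LCAux

variable {n : ℕ}

lemma levelConvex_convex_sublevel {β : Type*} [LinearOrder β]
    {g : EuclideanSpace ℝ (Fin n) → β} (hg : LevelConvex g) (c : β) :
    Convex ℝ {x | g x ≤ c} := by
  intro x hx y hy a b ha hb hab
  have hmem : a ∈ Set.Icc (0:ℝ) 1 := ⟨ha, by linarith⟩
  have h := hg x y a hmem
  have hb' : (1 - a) = b := by linarith
  rw [hb'] at h
  exact le_trans h (max_le hx hy)

lemma levelConvex_jensen {g : EuclideanSpace ℝ (Fin n) → EReal} (hg : LevelConvex g)
    {ξ : EuclideanSpace ℝ (Fin n)} {p} (hp : p ∈ RepSet ξ) :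
    g ξ ≤ ⨆ i, g (p.2 i) := by
  have : ξ ∈ {x | g x ≤ ⨆ i, g (p.2 i)} := by
    rw [hp.2.2]
    exact Convex.sum_mem (levelConvex_convex_sublevel hg _) (fun i _ => hp.1 i) hp.2.1
      (fun i _ => le_iSup (fun j => g (p.2 j)) i)
  exact this

lemma coe_Gfun (f : EuclideanSpace ℝ (Fin n) → ℝ) (p) :
    ((Gfun f p : ℝ) : EReal) = ⨆ i, ((f (p.2 i) : ℝ) : EReal) := by
  apply le_antisymm
  · obtain ⟨i, _, hi⟩ := Finset.exists_mem_eq_sup' (Finset.univ_nonempty)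
      (fun i : Fin (n+1) => f (p.2 i))
    rw [show Gfun f p = f (p.2 i) from hi]
    exact le_iSup (fun j => ((f (p.2 j) : ℝ) : EReal)) i
  · exact iSup_le fun i => EReal.coe_le_coe_iff.2 (f_le_Gfun f p i)

lemma lcEnv_eq (f : EuclideanSpace ℝ (Fin n) → ℝ) (hf : Continuous f)
    (hcoer : ∀ M : ℝ, ∃ R : ℝ, ∀ ξ : EuclideanSpace ℝ (Fin n), R ≤ ‖ξ‖ → M ≤ f ξ)
    (ξ : EuclideanSpace ℝ (Fin n)) :
    lcEnv (fun η => (f η : EReal)) ξ = ((Ffun f ξ : ℝ) : EReal) := by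
  obtain ⟨p, hp, hFp, _⟩ := exists_min f hf hcoer ξ
  apply le_antisymm
  · refine iSup_le fun g => iSup_le fun hg => ?_
    calc g ξ ≤ ⨆ i, g (p.2 i) := levelConvex_jensen hg.1 hp
      _ ≤ ((Ffun f ξ : ℝ) : EReal) := by
          refine iSup_le fun i => le_trans (hg.2 (p.2 i)) ?_
          rw [hFp]
          exact EReal.coe_le_coe_iff.2 (f_le_Gfun f p i)
  · have hlc : LevelConvex (fun η => ((Ffun f η : ℝ) : EReal)) := by
      intro ξ' η t ht
      have h := Ffun_levelConvex f hf hcoer ξ' η t ht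
      simp only
      rcases le_max_iff.1 h with h' | h'
      · exact le_max_of_le_left (EReal.coe_le_coe_iff.2 h')
      · exact le_max_of_le_right (EReal.coe_le_coe_iff.2 h')
    have hle : (fun η => ((Ffun f η : ℝ) : EReal)) ≤ fun η => (f η : EReal) :=
      fun η => EReal.coe_le_coe_iff.2 (Ffun_le_self f hf hcoer η)
    exact le_iSup_of_le (fun η => ((Ffun f η : ℝ) : EReal)) (le_iSup_of_le ⟨hlc, hle⟩ le_rfl)

end LCAux

namespace LCAux

variable {n : ℕ}

lemma sum_const_inv : (∑ _i : Fin (n+1), ((n:ℝ)+1)⁻¹) = 1 := by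
  rw [Finset.sum_const, Finset.card_univ, Fintype.card_fin, nsmul_eq_mul]
  push_cast
  field_simp

lemma exists_big_weight {ξ : EuclideanSpace ℝ (Fin n)} {p} (hp : p ∈ RepSet ξ) :
    ∃ i, ((n:ℝ)+1)⁻¹ ≤ p.1 i := by
  by_contra h
  push_neg at h
  have : (1:ℝ) < 1 := by
    calc (1:ℝ) = ∑ i, p.1 i := hp.2.1.symm
      _ < ∑ _i : Fin (n+1), ((n:ℝ)+1)⁻¹ :=
          Finset.sum_lt_sum_of_nonempty Finset.univ_nonempty (fun i _ => h i)
      _ = 1 := sum_const_inv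
  exact lt_irrefl 1 this

lemma shift_bound {f : EuclideanSpace ℝ (Fin n) → ℝ} {c : ℝ} (hc : ∀ x, c ≤ f x)
    {R δ' ε : ℝ} (hδ'1 : δ' ≤ 1) (hε : 0 ≤ ε)
    (huc : ∀ x ∈ Metric.closedBall (0:EuclideanSpace ℝ (Fin n)) (R+1),
      ∀ y ∈ Metric.closedBall (0:EuclideanSpace ℝ (Fin n)) (R+1),
      dist x y ≤ δ' → dist (f x) (f y) ≤ ε)
    {a b : EuclideanSpace ℝ (Fin n)} {p} (hp : p ∈ RepSet a) (hpR : ∀ i, ‖p.2 i‖ ≤ R)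
    (hab : ‖b - a‖ ≤ δ' / ((n:ℝ)+1)) :
    Ffun f b ≤ Gfun f p + ε := by
  obtain ⟨i0, hi0⟩ := exists_big_weight hp
  have hinvpos : (0:ℝ) < ((n:ℝ)+1)⁻¹ := by positivity
  have hl0 : 0 < p.1 i0 := lt_of_lt_of_le hinvpos hi0
  set v : EuclideanSpace ℝ (Fin n) := (p.1 i0)⁻¹ • (b - a) with hv
  have hvnorm : ‖v‖ ≤ δ' := by
    rw [hv, norm_smul, Real.norm_eq_abs, abs_of_pos (inv_pos.2 hl0)]
    have hinv : (p.1 i0)⁻¹ ≤ (n:ℝ)+1 := by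
      rw [← inv_inv ((n:ℝ)+1)]
      exact inv_anti₀ hinvpos hi0
    calc (p.1 i0)⁻¹ * ‖b - a‖ ≤ ((n:ℝ)+1) * (δ' / ((n:ℝ)+1)) :=
          mul_le_mul hinv hab (norm_nonneg _) (by positivity)
      _ = δ' := by field_simp
  set q2 := Function.update p.2 i0 (p.2 i0 + v) with hq2
  have hq : (p.1, q2) ∈ RepSet b := by
    refine ⟨hp.1, hp.2.1, ?_⟩
    have hdiff : ∀ i ∈ Finset.univ \ {i0},
        p.1 i • q2 i = p.1 i • p.2 i := by
      intro i hi
      rw [Finset.mem_sdiff, Finset.mem_singleton] at hi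
      rw [hq2, Function.update_of_ne hi.2]
    have e1 : (∑ i, p.1 i • q2 i)
        = (∑ i ∈ Finset.univ \ {i0}, p.1 i • p.2 i) + p.1 i0 • (p.2 i0 + v) := by
      rw [Finset.sum_eq_sum_sdiff_singleton_add (Finset.mem_univ i0),
        Finset.sum_congr rfl hdiff, hq2, Function.update_self]
    have e2 : a = (∑ i ∈ Finset.univ \ {i0}, p.1 i • p.2 i) + p.1 i0 • p.2 i0 := by
      rw [hp.2.2]
      exact Finset.sum_eq_sum_sdiff_singleton_add (Finset.mem_univ i0) _
    have e3 : p.1 i0 • v = b - a := by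
      rw [hv, smul_smul, mul_inv_cancel₀ (ne_of_gt hl0), one_smul]
    show b = ∑ i, p.1 i • q2 i
    rw [e1, smul_add, e3, ← add_assoc, ← e2]
    abel
  calc Ffun f b ≤ Gfun f (p.1, q2) := Ffun_le hc hq
    _ ≤ Gfun f p + ε := by
        refine Gfun_le f _ (fun i => ?_)
        by_cases hi : i = i0
        · subst hi
          have hx : p.2 i + v ∈ Metric.closedBall (0:EuclideanSpace ℝ (Fin n)) (R+1) := by
            rw [Metric.mem_closedBall, dist_zero_right]
            calc ‖p.2 i + v‖ ≤ ‖p.2 i‖ + ‖v‖ := norm_add_le _ _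
              _ ≤ R + 1 := add_le_add (hpR i) (le_trans hvnorm hδ'1)
          have hy : p.2 i ∈ Metric.closedBall (0:EuclideanSpace ℝ (Fin n)) (R+1) := by
            rw [Metric.mem_closedBall, dist_zero_right]
            linarith [hpR i]
          have hd : dist (p.2 i + v) (p.2 i) ≤ δ' := by
            rw [dist_eq_norm, add_sub_cancel_left]
            exact hvnorm
          have habs := huc _ hx _ hy hd
          rw [Real.dist_eq] at habs
          have h1 : f (p.2 i + v) ≤ f (p.2 i) + ε := by
            have := abs_le.1 habs
            linarith [this.2]
          calc f ((p.1, q2).2 i) = f (p.2 i + v) := by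
                rw [show (p.1, q2).2 = q2 from rfl, hq2, Function.update_self]
            _ ≤ f (p.2 i) + ε := h1
            _ ≤ Gfun f p + ε := add_le_add_left (f_le_Gfun f p i) ε
        · calc f ((p.1, q2).2 i) = f (p.2 i) := by
                rw [show (p.1, q2).2 = q2 from rfl, hq2, Function.update_of_ne hi]
            _ ≤ Gfun f p := f_le_Gfun f p i
            _ ≤ Gfun f p + ε := le_add_of_nonneg_right hε

end LCAux

namespace LCAux

variable {n : ℕ}

lemma Ffun_continuous (f : EuclideanSpace ℝ (Fin n) → ℝ) (hf : Continuous f)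
    (hcoer : ∀ M : ℝ, ∃ R : ℝ, ∀ ξ : EuclideanSpace ℝ (Fin n), R ≤ ‖ξ‖ → M ≤ f ξ) :
    Continuous (Ffun f) := by
  obtain ⟨c, hc⟩ := exists_lb f hf hcoer
  rw [continuous_iff_continuousAt]
  intro ξ
  rw [Metric.continuousAt_iff]
  intro ε hε
  obtain ⟨xmax, _, hxmax⟩ := (isCompact_closedBall ξ 1).exists_isMaxOn
    ⟨ξ, by simp⟩ hf.continuousOn
  set C := f xmax with hC
  obtain ⟨R0, hR0⟩ := hcoer (C + 1)
  set R := max R0 0 with hRdef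
  have huc0 := (isCompact_closedBall (0:EuclideanSpace ℝ (Fin n)) (R+1)).uniformContinuousOn_of_continuous
    hf.continuousOn
  rw [Metric.uniformContinuousOn_iff] at huc0
  obtain ⟨δ0, hδ0, hδ⟩ := huc0 (ε/2) (by positivity)
  set δ' := min δ0 1 / 2 with hδ'def
  have hδ'pos : 0 < δ' := by
    have : 0 < min δ0 1 := lt_min hδ0 one_pos
    positivity
  have hδ'1 : δ' ≤ 1 := by
    have : min δ0 1 ≤ 1 := min_le_right _ _
    rw [hδ'def]; linarith
  have huc : ∀ x ∈ Metric.closedBall (0:EuclideanSpace ℝ (Fin n)) (R+1),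
      ∀ y ∈ Metric.closedBall (0:EuclideanSpace ℝ (Fin n)) (R+1),
      dist x y ≤ δ' → dist (f x) (f y) ≤ ε/2 := by
    intro x hx y hy hxy
    have hlt : dist x y < δ0 := by
      have : min δ0 1 ≤ δ0 := min_le_left _ _
      rw [hδ'def] at hxy
      linarith
    exact le_of_lt (hδ x hx y hy hlt)
  set δ := δ' / ((n:ℝ)+1) with hδdef
  have hδpos : 0 < δ := by positivity
  refine ⟨δ, hδpos, fun {ξ'} hξ' => ?_⟩
  have hδle1 : δ ≤ 1 := by
    rw [hδdef]
    calc δ' / ((n:ℝ)+1) ≤ δ' / 1 := by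
          apply div_le_div_of_nonneg_left hδ'pos.le one_pos
          · push_cast; linarith [Nat.cast_nonneg (α := ℝ) n]
      _ = δ' := div_one _
      _ ≤ 1 := hδ'1
  have hξ'ball : ξ' ∈ Metric.closedBall ξ 1 :=
    Metric.mem_closedBall.2 (le_trans (le_of_lt hξ') hδle1)
  obtain ⟨p, hp, hFp, _⟩ := exists_min f hf hcoer ξ
  obtain ⟨p', hp', hFp', _⟩ := exists_min f hf hcoer ξ'
  have hnorm : ∀ ζ ∈ Metric.closedBall ξ 1, ∀ q ∈ RepSet ζ,
      Ffun f ζ = Gfun f q → ∀ i, ‖q.2 i‖ ≤ R := by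
    intro ζ hζ q hq hGq i
    by_contra hcon
    push_neg at hcon
    have h1 : C + 1 ≤ f (q.2 i) :=
      hR0 _ (le_trans (le_max_left _ _) hcon.le)
    have h2 : f (q.2 i) ≤ C := by
      calc f (q.2 i) ≤ Gfun f q := f_le_Gfun f q i
        _ = Ffun f ζ := hGq.symm
        _ ≤ f ζ := Ffun_le_self f hf hcoer ζ
        _ ≤ C := hxmax hζ
    linarith
  have hpt : ∀ i, ‖p.2 i‖ ≤ R :=
    hnorm ξ (Metric.mem_closedBall_self zero_le_one) p hp hFp
  have hpt' : ∀ i, ‖p'.2 i‖ ≤ R := hnorm ξ' hξ'ball p' hp' hFp'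
  have hab : ‖ξ' - ξ‖ ≤ δ' / ((n:ℝ)+1) := by
    rw [← dist_eq_norm]
    exact le_of_lt hξ'
  have hba : ‖ξ - ξ'‖ ≤ δ' / ((n:ℝ)+1) := by
    rw [← dist_eq_norm, dist_comm]
    exact le_of_lt hξ'
  have h1 : Ffun f ξ' ≤ Ffun f ξ + ε/2 := by
    have h := shift_bound hc hδ'1 (by positivity) huc hp hpt hab
    rw [hFp]; exact h
  have h2 : Ffun f ξ ≤ Ffun f ξ' + ε/2 := by
    have h := shift_bound hc hδ'1 (by positivity) huc hp' hpt' hba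
    rw [hFp']; exact h
  rw [Real.dist_eq]
  rw [abs_sub_lt_iff]
  constructor <;> linarith

end LCAux

namespace LCAux

variable {n : ℕ}

lemma coeFfun_levelConvex (f : EuclideanSpace ℝ (Fin n) → ℝ) (hf : Continuous f)
    (hcoer : ∀ M : ℝ, ∃ R : ℝ, ∀ ξ : EuclideanSpace ℝ (Fin n), R ≤ ‖ξ‖ → M ≤ f ξ) :
    LevelConvex (fun η => ((Ffun f η : ℝ) : EReal)) := by
  intro ξ' η t ht
  have h := Ffun_levelConvex f hf hcoer ξ' η t ht
  simp only
  rcases le_max_iff.1 h with h' | h'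
  · exact le_max_of_le_left (EReal.coe_le_coe_iff.2 h')
  · exact le_max_of_le_right (EReal.coe_le_coe_iff.2 h')

end LCAux

/-- If `f : ℝⁿ → ℝ` is continuous, `f^lc > -∞` everywhere and `f ξ → +∞` as `|ξ| → +∞`,
then the infimum in the Carathéodory formula for `f^lc` is attained, `f^lc` is continuous,
and `f^lslc = f^lc`. -/
theorem lcEnv_min_attained_and_continuous {n : ℕ}
    (f : EuclideanSpace ℝ (Fin n) → ℝ) (hf : Continuous f)
    (hlcbot : ∀ ξ, lcEnv (fun η => (f η : EReal)) ξ ≠ ⊥)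
    (hcoer : ∀ M : ℝ, ∃ R : ℝ, ∀ ξ : EuclideanSpace ℝ (Fin n), R ≤ ‖ξ‖ → M ≤ f ξ) :
    (∀ ξ : EuclideanSpace ℝ (Fin n),
      ∃ (ξs : Fin (n + 1) → EuclideanSpace ℝ (Fin n)) (l : Fin (n + 1) → ℝ),
        (∀ i, 0 ≤ l i) ∧ (∑ i, l i) = 1 ∧ ξ = ∑ i, l i • ξs i ∧
        lcEnv (fun η => (f η : EReal)) ξ = ⨆ i, (f (ξs i) : EReal)) ∧
    Continuous (lcEnv (fun η => (f η : EReal))) ∧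
    lslcEnv (fun η => (f η : EReal)) = lcEnv (fun η => (f η : EReal)) := by
  have hEq := LCAux.lcEnv_eq f hf hcoer
  have hFcont : Continuous fun ξ => ((LCAux.Ffun f ξ : ℝ) : EReal) :=
    continuous_coe_real_ereal.comp (LCAux.Ffun_continuous f hf hcoer)
  have hfun : lcEnv (fun η => (f η : EReal)) = fun ξ => ((LCAux.Ffun f ξ : ℝ) : EReal) :=
    funext hEq
  refine ⟨?_, ?_, ?_⟩
  · intro ξ
    obtain ⟨p, hp, hFp, _⟩ := LCAux.exists_min f hf hcoer ξ
    refine ⟨p.2, p.1, hp.1, hp.2.1, hp.2.2, ?_⟩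
    rw [hEq ξ, hFp, LCAux.coe_Gfun]
  · rw [hfun]
    exact hFcont
  · funext ξ
    apply le_antisymm
    · refine iSup_le fun g => iSup_le fun hg => ?_
      exact le_iSup_of_le g (le_iSup_of_le ⟨hg.2.1, hg.2.2⟩ le_rfl)
    · rw [hEq ξ]
      have hle : (fun η => ((LCAux.Ffun f η : ℝ) : EReal)) ≤ fun η => (f η : EReal) :=
        fun η => EReal.coe_le_coe_iff.2 (LCAux.Ffun_le_self f hf hcoer η)
      exact le_iSup_of_le (fun η => ((LCAux.Ffun f η : ℝ) : EReal))
        (le_iSup_of_le ⟨hFcont.lowerSemicontinuous,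
          LCAux.coeFfun_levelConvex f hf hcoer, hle⟩ le_rfl)
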